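/- Let J = (a,b)^{a_1} ∩ (a,c)^{a_2} ∩ (a,d)^{a_3} ∩ (b,c)^{a_4} ∩ (b,d)^{a_5} ∩ (c,d)^{a_6} in k[a,b,c,d] with not all a_i zero, and suppose a_1+a_2 ≥ a_4, a_1+a_3 ≥ a_5, a_2+a_3 ≥ a_6. Let a_i' = max{0, a_i − 1}. Then J = a·I + (b^{a_1} c^{a_2} d^{a_3}), where I = (a,b)^{a_1'} ∩ (a,c)^{a_2'} ∩ (a,d)^{a_3'} ∩ (b,c)^{a_4} ∩ (b,d)^{a_5} ∩ (c,d)^{a_6}. -/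

import Mathlib

open MvPolynomial


/-- The defining ideal of the tetrahedral curve `(a 0, …, a 5)` in `k[a,b,c,d]`. -/
noncomputable def tetIdeal (k : Type) [Field k] (a : Fin 6 → ℕ) : Ideal (MvPolynomial (Fin 4) k) :=
  (Ideal.span {X 0, X 1}) ^ (a 0) ⊓ (Ideal.span {X 0, X 2}) ^ (a 1) ⊓
  (Ideal.span {X 0, X 3}) ^ (a 2) ⊓ (Ideal.span {X 1, X 2}) ^ (a 3) ⊓
  (Ideal.span {X 1, X 3}) ^ (a 4) ⊓ (Ideal.span {X 2, X 3}) ^ (a 5)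

open Finsupp

variable {k : Type} [Field k]

/-- The monomial ideal generated by monomials with exponents in `S`. -/
noncomputable def mIdeal (k : Type) [Field k] (S : Set (Fin 4 →₀ ℕ)) :
    Ideal (MvPolynomial (Fin 4) k) :=
  Ideal.span ((fun s => monomial s (1 : k)) '' S)

lemma X_eq_mono (i : Fin 4) : (X i : MvPolynomial (Fin 4) k) = monomial (single i 1) 1 := rfl

lemma mem_mIdeal_pair {n : ℕ} {i j : Fin 4} {f : MvPolynomial (Fin 4) k} :
    f ∈ mIdeal k {v | n ≤ v i + v j} ↔ ∀ m ∈ f.support, n ≤ m i + m j := by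
  rw [mIdeal, mem_ideal_span_monomial_image]
  constructor
  · intro h m hm
    obtain ⟨s, hs, hsm⟩ := h m hm
    exact hs.trans (Nat.add_le_add (hsm i) (hsm j))
  · intro h m hm
    exact ⟨m, h m hm, le_rfl⟩

lemma step_mem {i j : Fin 4} (hij : i ≠ j) (n : ℕ) (v : Fin 4 →₀ ℕ) (h1 : 1 ≤ v i)
    (h : n + 1 ≤ v i + v j) :
    monomial v (1 : k) ∈ mIdeal k {w | n ≤ w i + w j} * Ideal.span {X i, X j} := by
  have hle : single i 1 ≤ v := Finsupp.single_le_iff.2 h1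
  have heq : monomial v (1 : k) = monomial (v - single i 1) 1 * monomial (single i 1) 1 := by
    rw [monomial_mul, one_mul, tsub_add_cancel_of_le hle]
  rw [heq]
  refine Ideal.mul_mem_mul (Ideal.subset_span ⟨_, ?_, rfl⟩) (Ideal.subset_span ?_)
  · simp only [Set.mem_setOf_eq, Finsupp.tsub_apply, Finsupp.single_eq_same,
      Finsupp.single_eq_of_ne' hij]
    omega
  · left; exact (X_eq_mono i).symm

lemma pow_eq {i j : Fin 4} (hij : i ≠ j) (n : ℕ) :
    (Ideal.span {X i, X j} : Ideal (MvPolynomial (Fin 4) k)) ^ n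
      = mIdeal k {v | n ≤ v i + v j} := by
  induction n with
  | zero =>
    rw [pow_zero, Ideal.one_eq_top, eq_comm, Ideal.eq_top_iff_one]
    have : (1 : MvPolynomial (Fin 4) k) = monomial 0 1 := by simp
    rw [this]
    exact Ideal.subset_span ⟨0, by simp, rfl⟩
  | succ n ih =>
    rw [pow_succ, ih]
    apply le_antisymm
    · rw [mIdeal, mIdeal, Ideal.span_mul_span', Ideal.span_le]
      rintro z hz
      rw [Set.mem_mul] at hz
      obtain ⟨x, ⟨u, hu, rfl⟩, y, hy, rfl⟩ := hz
      rcases hy with rfl | rfl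
      · rw [X_eq_mono, monomial_mul, one_mul]
        refine Ideal.subset_span ⟨u + single i 1, ?_, rfl⟩
        simp only [Set.mem_setOf_eq, Finsupp.add_apply, Finsupp.single_eq_same,
          Finsupp.single_eq_of_ne hij] at hu ⊢
        omega
      · rw [X_eq_mono, monomial_mul, one_mul]
        refine Ideal.subset_span ⟨u + single j 1, ?_, rfl⟩
        simp only [Set.mem_setOf_eq, Finsupp.add_apply, Finsupp.single_eq_same,
          Finsupp.single_eq_of_ne hij.symm] at hu ⊢
        omega
    · rw [mIdeal, Ideal.span_le]
      rintro z ⟨v, hv, rfl⟩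
      simp only [Set.mem_setOf_eq] at hv
      by_cases h1 : 1 ≤ v i
      · exact step_mem hij n v h1 hv
      · have h2 : 1 ≤ v j := by omega
        have hset : {w : Fin 4 →₀ ℕ | n ≤ w i + w j} = {w | n ≤ w j + w i} := by
          ext w; simp [add_comm]
        have hpair : ({X i, X j} : Set (MvPolynomial (Fin 4) k)) = {X j, X i} :=
          Set.pair_comm _ _
        rw [hset, hpair]
        exact step_mem hij.symm n v h2 (by omega)

/-- The exponent set of the tetrahedral ideal. -/
def tetSet (a : Fin 6 → ℕ) : Set (Fin 4 →₀ ℕ) :=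
  {v | a 0 ≤ v 0 + v 1 ∧ a 1 ≤ v 0 + v 2 ∧ a 2 ≤ v 0 + v 3 ∧
       a 3 ≤ v 1 + v 2 ∧ a 4 ≤ v 1 + v 3 ∧ a 5 ≤ v 2 + v 3}

lemma mono_mem_pair {n : ℕ} {i j : Fin 4} {v : Fin 4 →₀ ℕ} (h : n ≤ v i + v j) :
    monomial v (1 : k) ∈ mIdeal k {w | n ≤ w i + w j} :=
  Ideal.subset_span ⟨v, h, rfl⟩

lemma tet_eq (a : Fin 6 → ℕ) : tetIdeal k a = mIdeal k (tetSet a) := by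
  apply le_antisymm
  · intro f hf
    simp only [tetIdeal, Ideal.mem_inf] at hf
    obtain ⟨⟨⟨⟨⟨h01, h02⟩, h03⟩, h12⟩, h13⟩, h23⟩ := hf
    rw [pow_eq (by decide : (0 : Fin 4) ≠ 1), mem_mIdeal_pair] at h01
    rw [pow_eq (by decide : (0 : Fin 4) ≠ 2), mem_mIdeal_pair] at h02
    rw [pow_eq (by decide : (0 : Fin 4) ≠ 3), mem_mIdeal_pair] at h03
    rw [pow_eq (by decide : (1 : Fin 4) ≠ 2), mem_mIdeal_pair] at h12
    rw [pow_eq (by decide : (1 : Fin 4) ≠ 3), mem_mIdeal_pair] at h13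
    rw [pow_eq (by decide : (2 : Fin 4) ≠ 3), mem_mIdeal_pair] at h23
    rw [mIdeal, mem_ideal_span_monomial_image]
    intro m hm
    exact ⟨m, ⟨h01 m hm, h02 m hm, h03 m hm, h12 m hm, h13 m hm, h23 m hm⟩, le_rfl⟩
  · rw [mIdeal, Ideal.span_le]
    rintro z ⟨v, ⟨c1, c2, c3, c4, c5, c6⟩, rfl⟩
    simp only [tetIdeal, Ideal.mem_inf, SetLike.mem_coe]
    refine ⟨⟨⟨⟨⟨?_, ?_⟩, ?_⟩, ?_⟩, ?_⟩, ?_⟩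
    · rw [pow_eq (by decide : (0 : Fin 4) ≠ 1)]; exact mono_mem_pair c1
    · rw [pow_eq (by decide : (0 : Fin 4) ≠ 2)]; exact mono_mem_pair c2
    · rw [pow_eq (by decide : (0 : Fin 4) ≠ 3)]; exact mono_mem_pair c3
    · rw [pow_eq (by decide : (1 : Fin 4) ≠ 2)]; exact mono_mem_pair c4
    · rw [pow_eq (by decide : (1 : Fin 4) ≠ 3)]; exact mono_mem_pair c5
    · rw [pow_eq (by decide : (2 : Fin 4) ≠ 3)]; exact mono_mem_pair c6

/-- Basic double link structure of a tetrahedral curve: if `a₁+a₂ ≥ a₄`, `a₁+a₃ ≥ a₅`,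
`a₂+a₃ ≥ a₆`, then `J = a·I + (b^{a₁} c^{a₂} d^{a₃})`, where `I` is the ideal of the
tetrahedral curve with the first three weights reduced by one (truncated at 0). -/
theorem stmt16 {k : Type} [Field k] (a : Fin 6 → ℕ) (hnt : ∃ i, a i ≠ 0)
    (h1 : a 3 ≤ a 0 + a 1) (h2 : a 4 ≤ a 0 + a 2) (h3 : a 5 ≤ a 1 + a 2) :
    tetIdeal k a =
      Ideal.span {X 0} * tetIdeal k ![a 0 - 1, a 1 - 1, a 2 - 1, a 3, a 4, a 5] +
      Ideal.span {X 1 ^ a 0 * X 2 ^ a 1 * X 3 ^ a 2} := by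
  have hS' : tetSet ![a 0 - 1, a 1 - 1, a 2 - 1, a 3, a 4, a 5] =
      {v : Fin 4 →₀ ℕ | a 0 - 1 ≤ v 0 + v 1 ∧ a 1 - 1 ≤ v 0 + v 2 ∧ a 2 - 1 ≤ v 0 + v 3 ∧
        a 3 ≤ v 1 + v 2 ∧ a 4 ≤ v 1 + v 3 ∧ a 5 ≤ v 2 + v 3} := rfl
  have hF : (X 1 ^ a 0 * X 2 ^ a 1 * X 3 ^ a 2 : MvPolynomial (Fin 4) k) =
      monomial (single 1 (a 0) + single 2 (a 1) + single 3 (a 2)) 1 := by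
    rw [X_pow_eq_monomial, X_pow_eq_monomial, X_pow_eq_monomial, monomial_mul, monomial_mul,
      one_mul, one_mul]
  have happF : ∀ i : Fin 4,
      ((single (1 : Fin 4) (a 0) + single 2 (a 1) + single 3 (a 2) : Fin 4 →₀ ℕ)) i
      = if i = 1 then a 0 else if i = 2 then a 1 else if i = 3 then a 2 else 0 := by
    intro i
    fin_cases i <;> simp [Finsupp.single_apply]
  rw [tet_eq, tet_eq, hS', hF, Ideal.add_eq_sup]
  apply le_antisymm
  · rw [mIdeal, Ideal.span_le]
    rintro z ⟨v, ⟨c1, c2, c3, c4, c5, c6⟩, rfl⟩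
    show monomial v (1 : k) ∈ _
    by_cases h0 : v 0 = 0
    · refine Ideal.mem_sup_right ?_
      rw [Ideal.mem_span_singleton]
      have hle : single (1 : Fin 4) (a 0) + single 2 (a 1) + single 3 (a 2) ≤ v := by
        intro i
        rw [happF]
        fin_cases i <;> simp <;> omega
      exact ⟨monomial (v - (single 1 (a 0) + single 2 (a 1) + single 3 (a 2))) 1,
        by rw [monomial_mul, one_mul, add_tsub_cancel_of_le hle]⟩
    · refine Ideal.mem_sup_left ?_
      have hv0 : 1 ≤ v 0 := by omega
      have heq : monomial v (1 : k) = X 0 * monomial (v - single 0 1) 1 := by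
        rw [X_eq_mono, monomial_mul, one_mul,
          add_tsub_cancel_of_le (Finsupp.single_le_iff.2 hv0)]
      rw [heq]
      refine Ideal.mul_mem_mul (Ideal.mem_span_singleton_self _)
        (Ideal.subset_span ⟨v - single 0 1, ?_, rfl⟩)
      simp only [Set.mem_setOf_eq, Finsupp.tsub_apply, Finsupp.single_eq_same,
        Finsupp.single_eq_of_ne' (by decide : (0 : Fin 4) ≠ 1),
        Finsupp.single_eq_of_ne' (by decide : (0 : Fin 4) ≠ 2),
        Finsupp.single_eq_of_ne' (by decide : (0 : Fin 4) ≠ 3)]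
      refine ⟨by omega, by omega, by omega, by simpa using c4, by simpa using c5,
        by simpa using c6⟩
  · refine sup_le ?_ ?_
    · rw [mIdeal, mIdeal, Ideal.span_mul_span', Ideal.span_le]
      rintro z hz
      rw [Set.mem_mul] at hz
      obtain ⟨x, hx, y, ⟨w, hw, rfl⟩, rfl⟩ := hz
      rw [Set.mem_singleton_iff] at hx
      subst hx
      rw [X_eq_mono, monomial_mul, one_mul]
      obtain ⟨d1, d2, d3, d4, d5, d6⟩ := hw
      refine Ideal.subset_span ⟨single 0 1 + w, ?_, rfl⟩
      simp only [tetSet, Set.mem_setOf_eq, Finsupp.add_apply, Finsupp.single_eq_same,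
        Finsupp.single_eq_of_ne' (by decide : (0 : Fin 4) ≠ 1),
        Finsupp.single_eq_of_ne' (by decide : (0 : Fin 4) ≠ 2),
        Finsupp.single_eq_of_ne' (by decide : (0 : Fin 4) ≠ 3)]
      refine ⟨by omega, by omega, by omega, by simpa using d4, by simpa using d5,
        by simpa using d6⟩
    · rw [Ideal.span_le, Set.singleton_subset_iff]
      refine Ideal.subset_span ⟨single 1 (a 0) + single 2 (a 1) + single 3 (a 2), ?_, rfl⟩
      simp only [tetSet, Set.mem_setOf_eq]
      refine ⟨?_, ?_, ?_, ?_, ?_, ?_⟩ <;>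
        simp [Finsupp.add_apply, Finsupp.single_apply] <;> omega
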